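/- arXiv:2103.07275 — 4 statements merged into one kernel-verified Lean document; each statement's English description precedes it below -/
import Mathlib

section
/- Let K* = Pᶠ·Hᵀ·(H·Pᶠ·Hᵀ + R)⁻¹ be the Kalman gain. Then for every n×m real matrix K, det(Pᵃ(K*)) ≤ det(Pᵃ(K)); that is, the Kalman gain minimizes the generalized variance (the determinant of the analysis error covariance matrix) over all gain matrices. -/
open Matrix


lemma one_le_det_one_add {k : ℕ} {M : Matrix (Fin k) (Fin k) ℝ} (hM : M.PosSemidef) :
    1 ≤ (1 + M).det := by
  have hH := hM.isHermitian
  set U : Matrix (Fin k) (Fin k) ℝ := (hH.eigenvectorUnitary : Matrix (Fin k) (Fin k) ℝ) with hU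
  have hU1 : U * star U = 1 := Matrix.mem_unitaryGroup_iff.mp hH.eigenvectorUnitary.2
  set D : Matrix (Fin k) (Fin k) ℝ := diagonal (RCLike.ofReal ∘ hH.eigenvalues) with hD
  have hfact : 1 + M = U * (1 + D) * star U := by
    have : U * (1 + D) * star U = U * star U + U * D * star U := by noncomm_ring
    rw [this, hU1]
    conv_lhs => rw [hH.spectral_theorem, Unitary.conjStarAlgAut_apply]
  have hdet : (1 + M).det = (1 + D).det := by
    have hU2 : star U * U = 1 := mul_eq_one_comm.mp hU1
    rw [hfact, det_mul, det_mul, mul_comm, ← mul_assoc, ← det_mul, hU2, det_one, one_mul]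
  rw [hdet, hD]
  have : (1 : Matrix (Fin k) (Fin k) ℝ) + diagonal (RCLike.ofReal ∘ hH.eigenvalues)
      = diagonal (fun i => 1 + hH.eigenvalues i) := by
    rw [← diagonal_one, diagonal_add]
    simp [RCLike.ofReal_real_eq_id]
  rw [this, det_diagonal]
  calc (1:ℝ) = ∏ _i : Fin k, (1:ℝ) := by simp
    _ ≤ ∏ i : Fin k, (1 + hH.eigenvalues i) :=
      Finset.prod_le_prod (fun i _ => by norm_num) (fun i _ => by linarith [hM.eigenvalues_nonneg i])

open scoped MatrixOrder in
lemma det_le_det_add_psd {k : ℕ} {A B : Matrix (Fin k) (Fin k) ℝ}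
    (hA : A.PosDef) (hB : B.PosSemidef) : A.det ≤ (A + B).det := by
  set S := CFC.sqrt A with hSdef
  have hSS : S * S = A := CFC.sqrt_mul_sqrt_self A hA.posSemidef.nonneg
  have hdetA : (0:ℝ) < A.det := hA.det_pos
  have hdetS : S.det * S.det = A.det := by rw [← det_mul, hSS]
  have hSdet : IsUnit S.det := by
    refine isUnit_iff_ne_zero.mpr fun h => ?_
    rw [h, zero_mul] at hdetS; linarith
  have hSinvH : (S⁻¹)ᴴ = S⁻¹ := by
    rw [conjTranspose_nonsing_inv, (CFC.sqrt_nonneg A).posSemidef.isHermitian]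
  have hM : (S⁻¹ * B * S⁻¹).PosSemidef := by
    have := hB.conjTranspose_mul_mul_same S⁻¹
    rwa [hSinvH] at this
  have hfact : A + B = S * (1 + S⁻¹ * B * S⁻¹) * S := by
    have h1 : S * (S⁻¹ * B * S⁻¹) * S = (S * S⁻¹) * B * (S⁻¹ * S) := by noncomm_ring
    have : S * (1 + S⁻¹ * B * S⁻¹) * S = S * S + S * (S⁻¹ * B * S⁻¹) * S := by noncomm_ring
    rw [this, h1, Matrix.mul_nonsing_inv _ hSdet, Matrix.nonsing_inv_mul _ hSdet,
      one_mul, mul_one, hSS]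
  have h1 : 1 ≤ (1 + S⁻¹ * B * S⁻¹).det := one_le_det_one_add hM
  calc A.det = 1 * A.det := (one_mul _).symm
    _ ≤ (1 + S⁻¹ * B * S⁻¹).det * A.det := by nlinarith
    _ = (A + B).det := by rw [hfact, det_mul, det_mul, ← hdetS]; ring

lemma joseph_posDef {n m : ℕ} {Pf : Matrix (Fin n) (Fin n) ℝ} (hPf : Pf.PosDef)
    {R : Matrix (Fin m) (Fin m) ℝ} (hR : R.PosDef)
    (H : Matrix (Fin m) (Fin n) ℝ) (K : Matrix (Fin n) (Fin m) ℝ) :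
    ((1 - K * H) * Pf * (1 - K * H)ᵀ + K * R * Kᵀ).PosDef := by
  have hT1 : (1 - K * H)ᵀ = (1 - K * H)ᴴ := ((1 - K * H).conjTranspose_eq_transpose_of_trivial).symm
  have hT2 : Kᵀ = Kᴴ := (K.conjTranspose_eq_transpose_of_trivial).symm
  have hsd : ((1 - K * H) * Pf * (1 - K * H)ᵀ + K * R * Kᵀ).PosSemidef := by
    rw [hT1, hT2]
    exact (hPf.posSemidef.mul_mul_conjTranspose_same _).add
      (hR.posSemidef.mul_mul_conjTranspose_same _)
  refine .of_dotProduct_mulVec_pos hsd.isHermitian fun x hx => ?_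
  set y := (1 - K * H)ᵀ *ᵥ x with hy
  set z := Kᵀ *ᵥ x with hz
  have key : star x ⬝ᵥ (((1 - K * H) * Pf * (1 - K * H)ᵀ + K * R * Kᵀ) *ᵥ x)
      = star y ⬝ᵥ (Pf *ᵥ y) + star z ⬝ᵥ (R *ᵥ z) := by
    simp only [add_mulVec, dotProduct_add, hy, hz, star_trivial]
    congr 1
    · rw [← mulVec_mulVec, ← mulVec_mulVec, dotProduct_mulVec x, ← mulVec_transpose,
        dotProduct_mulVec _ Pf]
    · rw [← mulVec_mulVec, ← mulVec_mulVec, dotProduct_mulVec x, ← mulVec_transpose,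
        dotProduct_mulVec _ R]
  rw [key]
  by_cases hzz : z = 0
  · have hyx : y = x := by
      rw [hy, transpose_sub, transpose_one, transpose_mul, sub_mulVec, one_mulVec,
        ← mulVec_mulVec, ← hz, hzz, mulVec_zero, sub_zero]
    have h1 : 0 < star y ⬝ᵥ (Pf *ᵥ y) := hPf.dotProduct_mulVec_pos (hyx ▸ hx)
    have h2 : 0 ≤ star z ⬝ᵥ (R *ᵥ z) := hR.posSemidef.dotProduct_mulVec_nonneg z
    linarith
  · have h1 : 0 ≤ star y ⬝ᵥ (Pf *ᵥ y) := hPf.posSemidef.dotProduct_mulVec_nonneg y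
    have h2 : 0 < star z ⬝ᵥ (R *ᵥ z) := hR.dotProduct_mulVec_pos hzz
    linarith

/-- The Kalman gain `K* = Pᶠ Hᵀ (H Pᶠ Hᵀ + R)⁻¹` minimizes the generalized
variance, i.e. the determinant of the analysis error covariance matrix
`Pᵃ(K) = (I − K H) Pᶠ (I − K H)ᵀ + K R Kᵀ`, over all gain matrices `K`. -/
theorem kalman_gain_minimizes_generalized_variance
    (n m : ℕ) (hn : 0 < n) (hm : 0 < m)
    (Pf : Matrix (Fin n) (Fin n) ℝ) (hPf : Pf.PosDef)
    (R : Matrix (Fin m) (Fin m) ℝ) (hR : R.PosDef)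
    (H : Matrix (Fin m) (Fin n) ℝ)
    (Pa : Matrix (Fin n) (Fin m) ℝ → Matrix (Fin n) (Fin n) ℝ)
    (hPa : ∀ K, Pa K = (1 - K * H) * Pf * (1 - K * H)ᵀ + K * R * Kᵀ)
    (Kstar : Matrix (Fin n) (Fin m) ℝ)
    (hKstar : Kstar = Pf * Hᵀ * (H * Pf * Hᵀ + R)⁻¹) :
    ∀ K : Matrix (Fin n) (Fin m) ℝ, (Pa Kstar).det ≤ (Pa K).det := by
  intro K
  set S : Matrix (Fin m) (Fin m) ℝ := H * Pf * Hᵀ + R with hSdef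
  have hHT : Hᵀ = Hᴴ := (H.conjTranspose_eq_transpose_of_trivial).symm
  have hS : S.PosDef := by
    rw [hSdef, hHT]
    exact Matrix.PosDef.posSemidef_add (hPf.posSemidef.mul_mul_conjTranspose_same H) hR
  have hPfsymm : Pfᵀ = Pf := by
    have := hPf.isHermitian
    rwa [← Pf.conjTranspose_eq_transpose_of_trivial]
  have hSsymm : Sᵀ = S := by
    have := hS.isHermitian
    rwa [← S.conjTranspose_eq_transpose_of_trivial]
  have hKS : Kstar * S = Pf * Hᵀ := by
    rw [hKstar, Matrix.nonsing_inv_mul_cancel_right _ _ (isUnit_iff_ne_zero.mpr hS.det_pos.ne')]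
  have h1 : S * Kstarᵀ = H * Pf := by
    have : S * Kstarᵀ = (Kstar * Sᵀ)ᵀ := by rw [transpose_mul, transpose_transpose]
    rw [this, hSsymm, hKS, transpose_mul, transpose_transpose, hPfsymm]
  have h2 : (Pf * Hᵀ) * Kstarᵀ = Kstar * (H * Pf) := by
    rw [← hKS, Matrix.mul_assoc, h1]
  have h3 : Kstar * S * Kstarᵀ = Kstar * (H * Pf) := by rw [Matrix.mul_assoc, h1]
  have step1 : ∀ J : Matrix (Fin n) (Fin m) ℝ,
      Pa J = Pf - J * (H * Pf) - (Pf * Hᵀ) * Jᵀ + J * S * Jᵀ := by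
    intro J
    rw [hPa, hSdef]
    simp only [transpose_sub, transpose_one, transpose_mul, Matrix.sub_mul, Matrix.mul_sub,
      Matrix.add_mul, Matrix.mul_add, Matrix.mul_one, Matrix.one_mul, Matrix.mul_assoc]
    abel
  have step2 : (K - Kstar) * S * (K - Kstar)ᵀ
      = K * S * Kᵀ - K * (H * Pf) - (Pf * Hᵀ) * Kᵀ + (Pf * Hᵀ) * Kstarᵀ := by
    have e : (K - Kstar) * S * (K - Kstar)ᵀ
        = K * S * Kᵀ - K * (S * Kstarᵀ) - (Kstar * S) * Kᵀ + (Kstar * S) * Kstarᵀ := by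
      simp only [transpose_sub, Matrix.sub_mul, Matrix.mul_sub, Matrix.add_mul, Matrix.mul_add,
        Matrix.mul_assoc]
      abel
    rw [e, h1, hKS]
  have identity : Pa K = Pa Kstar + (K - Kstar) * S * (K - Kstar)ᵀ := by
    rw [step1 K, step1 Kstar, step2, h3, h2]
    abel
  have hDSD : ((K - Kstar) * S * (K - Kstar)ᵀ).PosSemidef := by
    have hT : (K - Kstar)ᵀ = (K - Kstar)ᴴ := ((K - Kstar).conjTranspose_eq_transpose_of_trivial).symm
    rw [hT]
    exact hS.posSemidef.mul_mul_conjTranspose_same _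
  have hPaStar : (Pa Kstar).PosDef := by
    rw [hPa]
    exact joseph_posDef hPf hR H Kstar
  rw [identity]
  exact det_le_det_add_psd hPaStar hDSD
end

section
/- For any n×m real matrices K and E (a direction of perturbation), the real function t ↦ log(det(Pᵃ(K + t·E))) is differentiable at t = 0 with derivative equal to tr((2·K·H·Pᶠ·Hᵀ + 2·K·R − 2·Pᶠ·Hᵀ)ᵀ · (Pᵃ(K))⁻¹ · E). -/
open Matrix Polynomial

private lemma coeff_one_eq_of_pow_dvd {p q : ℝ[X]} (h : (X : ℝ[X])^2 ∣ p - q) :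
    p.coeff 1 = q.coeff 1 := by
  obtain ⟨r, hr⟩ := h
  have hp : p = q + r * X ^ 2 := by
    have := hr
    rw [mul_comm] at this
    linear_combination this
  rw [hp, Polynomial.coeff_add, Polynomial.coeff_mul_X_pow']
  simp

private lemma det_hasDerivAt {N : ℕ} (M B C : Matrix (Fin N) (Fin N) ℝ) (hM : IsUnit M.det) :
    HasDerivAt (fun t : ℝ => (M + t • B + (t * t) • C).det)
      (M.det * (M⁻¹ * B).trace) 0 := by
  classical
  set P : Matrix (Fin N) (Fin N) ℝ[X] :=
    M.map Polynomial.C + (X : ℝ[X]) • B.map Polynomial.C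
      + ((X : ℝ[X]) * X) • C.map Polynomial.C with hP
  have hfun : ∀ t : ℝ, (M + t • B + (t * t) • C).det = (det P).eval t := by
    intro t
    have h1 : (M + t • B + (t * t) • C) = P.map (eval t) := by
      ext i j
      simp [hP, Matrix.map_apply, Matrix.add_apply, Matrix.smul_apply, smul_eq_mul]
      ring
    rw [h1, show P.map (eval t) = (evalRingHom t).mapMatrix P from rfl, ← RingHom.map_det]
    rfl
  have hQcoeff : (det P).coeff 1 = M.det * (M⁻¹ * B).trace := by
    set Q : Matrix (Fin N) (Fin N) ℝ[X] :=
      1 + (X : ℝ[X]) • (M⁻¹ * B).map Polynomial.C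
        + ((X : ℝ[X]) * X) • (M⁻¹ * C).map Polynomial.C with hQ
    set Q' : Matrix (Fin N) (Fin N) ℝ[X] :=
      1 + (X : ℝ[X]) • (M⁻¹ * B).map Polynomial.C with hQ'
    have hMB : M.map Polynomial.C * ((M⁻¹ * B).map Polynomial.C) = B.map Polynomial.C := by
      rw [← Matrix.map_mul (f := (Polynomial.C : ℝ →+* ℝ[X])), ← Matrix.mul_assoc,
        Matrix.mul_nonsing_inv _ hM, Matrix.one_mul]
    have hMC : M.map Polynomial.C * ((M⁻¹ * C).map Polynomial.C) = C.map Polynomial.C := by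
      rw [← Matrix.map_mul (f := (Polynomial.C : ℝ →+* ℝ[X])), ← Matrix.mul_assoc,
        Matrix.mul_nonsing_inv _ hM, Matrix.one_mul]
    have hfact : P = M.map Polynomial.C * Q := by
      rw [hP, hQ, Matrix.mul_add, Matrix.mul_add, Matrix.mul_one,
        Matrix.mul_smul, Matrix.mul_smul, hMB, hMC]
    have hdetP : det P = Polynomial.C M.det * det Q := by
      rw [hfact, Matrix.det_mul]
      congr 1
      rw [RingHom.map_det]
      rfl
    -- det Q and det Q' agree mod X^2
    have hdvd : (X : ℝ[X])^2 ∣ det Q - det Q' := by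
      set I : Ideal ℝ[X] := Ideal.span {(X : ℝ[X])^2} with hI
      have hX2 : Ideal.Quotient.mk I ((X : ℝ[X])^2) = 0 := by
        rw [Ideal.Quotient.eq_zero_iff_mem]
        exact Ideal.subset_span rfl
      have hmap : Q.map (Ideal.Quotient.mk I) = Q'.map (Ideal.Quotient.mk I) := by
        ext i j
        have h0 : Q i j = Q' i j + (X : ℝ[X])^2 * Polynomial.C ((M⁻¹ * C) i j) := by
          simp only [hQ, Matrix.add_apply, Matrix.smul_apply, smul_eq_mul, Matrix.map_apply, sq]
          try ring
        simp only [Matrix.map_apply, h0, _root_.map_add, _root_.map_mul, hX2, zero_mul, add_zero]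
      have hzero : Ideal.Quotient.mk I (det Q - det Q') = 0 := by
        rw [map_sub, RingHom.map_det, RingHom.map_det]
        rw [show (Ideal.Quotient.mk I).mapMatrix Q = Q.map (Ideal.Quotient.mk I) from rfl,
          show (Ideal.Quotient.mk I).mapMatrix Q' = Q'.map (Ideal.Quotient.mk I) from rfl,
          hmap, sub_self]
      rw [← Ideal.mem_span_singleton, ← hI]
      exact (Ideal.Quotient.eq_zero_iff_mem).mp hzero
    have hc1 : (det Q).coeff 1 = (M⁻¹ * B).trace := by
      rw [coeff_one_eq_of_pow_dvd hdvd, hQ']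
      exact Matrix.coeff_det_one_add_X_smul_one _
    rw [hdetP, Polynomial.coeff_C_mul, hc1]
  have hD : HasDerivAt (fun t : ℝ => (det P).eval t) ((derivative (det P)).eval 0) 0 :=
    Polynomial.hasDerivAt _ 0
  have heval : (derivative (det P)).eval 0 = M.det * (M⁻¹ * B).trace := by
    rw [← Polynomial.coeff_zero_eq_eval_zero, Polynomial.coeff_derivative, ← hQcoeff]
    simp
  rw [funext hfun]
  exact heval ▸ hD


private lemma posDef_Pa {N m : ℕ} {Pf : Matrix (Fin N) (Fin N) ℝ} (hPf : Pf.PosDef)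
    {R : Matrix (Fin m) (Fin m) ℝ} (hR : R.PosDef) (H : Matrix (Fin m) (Fin N) ℝ)
    (K : Matrix (Fin N) (Fin m) ℝ) :
    ((1 - K * H) * Pf * (1 - K * H)ᵀ + K * R * Kᵀ).PosDef := by
  have hPf' : Pfᵀ = Pf := by
    rw [← conjTranspose_eq_transpose_of_trivial]; exact hPf.isHermitian.eq
  have hR' : Rᵀ = R := by
    rw [← conjTranspose_eq_transpose_of_trivial]; exact hR.isHermitian.eq
  rw [posDef_iff_dotProduct_mulVec]
  constructor
  · show _ᴴ = _
    simp only [conjTranspose_eq_transpose_of_trivial, transpose_add, transpose_mul,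
      transpose_transpose, hPf', hR', Matrix.mul_assoc]
  · intro x hx
    have key : ∀ (a : ℕ) (U : Matrix (Fin N) (Fin a) ℝ) (S : Matrix (Fin a) (Fin a) ℝ),
        star x ⬝ᵥ (U * S * Uᵀ) *ᵥ x = star (Uᵀ *ᵥ x) ⬝ᵥ S *ᵥ (Uᵀ *ᵥ x) := by
      intro a U S
      simp only [star_trivial, ← Matrix.mulVec_mulVec, Matrix.dotProduct_mulVec,
        Matrix.mulVec_transpose]
      try rw [← Matrix.dotProduct_mulVec]
    rw [Matrix.add_mulVec, dotProduct_add, key _ (1 - K * H) Pf, key _ K R]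
    set y := (1 - K * H)ᵀ *ᵥ x with hy
    set z := Kᵀ *ᵥ x with hz
    by_cases hyz : y = 0
    · have hzne : z ≠ 0 := by
        intro hz0
        apply hx
        have : y = x - Hᵀ *ᵥ z := by
          rw [hy, hz, transpose_sub, transpose_one, transpose_mul, Matrix.sub_mulVec,
            Matrix.one_mulVec, Matrix.mulVec_mulVec]
        rw [hz0, Matrix.mulVec_zero, sub_zero] at this
        rw [← this, hyz]
      have h1 : (0:ℝ) ≤ star y ⬝ᵥ Pf *ᵥ y := hPf.posSemidef.dotProduct_mulVec_nonneg y
      have h2 : (0:ℝ) < star z ⬝ᵥ R *ᵥ z := hR.dotProduct_mulVec_pos hzne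
      linarith
    · have h1 : (0:ℝ) < star y ⬝ᵥ Pf *ᵥ y := hPf.dotProduct_mulVec_pos hyz
      have h2 : (0:ℝ) ≤ star z ⬝ᵥ R *ᵥ z := hR.posSemidef.dotProduct_mulVec_nonneg z
      linarith

/-- For any gain matrix `K` and any direction `E`, the function
`t ↦ log (det (Pᵃ(K + t E)))` is differentiable at `t = 0`, with derivative
`tr ((2 K H Pᶠ Hᵀ + 2 K R − 2 Pᶠ Hᵀ)ᵀ (Pᵃ(K))⁻¹ E)`, where
`Pᵃ(K) = (I − K H) Pᶠ (I − K H)ᵀ + K R Kᵀ`. -/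
theorem log_det_analysis_covariance_hasDerivAt
    (n m : ℕ) (hn : 0 < n) (hm : 0 < m)
    (Pf : Matrix (Fin n) (Fin n) ℝ) (hPf : Pf.PosDef)
    (R : Matrix (Fin m) (Fin m) ℝ) (hR : R.PosDef)
    (H : Matrix (Fin m) (Fin n) ℝ)
    (Pa : Matrix (Fin n) (Fin m) ℝ → Matrix (Fin n) (Fin n) ℝ)
    (hPa : ∀ K, Pa K = (1 - K * H) * Pf * (1 - K * H)ᵀ + K * R * Kᵀ) :
    ∀ K E : Matrix (Fin n) (Fin m) ℝ,
      HasDerivAt (fun t : ℝ => Real.log (Pa (K + t • E)).det)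
        (((2 : ℝ) • (K * H * Pf * Hᵀ) + (2 : ℝ) • (K * R)
            - (2 : ℝ) • (Pf * Hᵀ))ᵀ * (Pa K)⁻¹ * E).trace 0 := by
  classical
  intro K E
  have hPf' : Pfᵀ = Pf := by
    rw [← conjTranspose_eq_transpose_of_trivial]; exact hPf.isHermitian.eq
  have hR' : Rᵀ = R := by
    rw [← conjTranspose_eq_transpose_of_trivial]; exact hR.isHermitian.eq
  have hMpos : (Pa K).PosDef := by rw [hPa]; exact posDef_Pa hPf hR H K
  have hdetpos : (0:ℝ) < (Pa K).det := hMpos.det_pos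
  have hunit : IsUnit (Pa K).det := isUnit_iff_ne_zero.mpr hdetpos.ne'
  have hMsymm : (Pa K)ᵀ = Pa K := by
    rw [← conjTranspose_eq_transpose_of_trivial]; exact hMpos.isHermitian.eq
  have hAsymm : ((Pa K)⁻¹)ᵀ = (Pa K)⁻¹ := by
    rw [transpose_nonsing_inv, hMsymm]
  set A := (Pa K)⁻¹ with hAdef
  set Bm := E * R * Kᵀ + K * R * Eᵀ - E * H * Pf * (1 - K * H)ᵀ - (1 - K * H) * Pf * (E * H)ᵀ
    with hBm
  set Cm := E * H * Pf * (E * H)ᵀ + E * R * Eᵀ with hCm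
  have hexp : ∀ t : ℝ, Pa (K + t • E) = Pa K + t • Bm + (t * t) • Cm := by
    intro t
    rw [hPa, hPa, hBm, hCm]
    simp only [sub_eq_add_neg, transpose_add, transpose_smul, transpose_neg,
      transpose_mul, transpose_one, Matrix.add_mul, Matrix.mul_add, Matrix.neg_mul,
      Matrix.mul_neg, neg_neg, neg_add, Matrix.smul_mul, Matrix.mul_smul, smul_smul,
      smul_add, smul_neg, Matrix.mul_assoc, Matrix.mul_one, Matrix.one_mul]
    module
  have hP0 : Pa (K + (0:ℝ) • E) = Pa K := by
    rw [hexp]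
    simp
  have hdet : HasDerivAt (fun t : ℝ => (Pa (K + t • E)).det)
      ((Pa K).det * (A * Bm).trace) 0 := by
    have hfe : (fun t : ℝ => (Pa (K + t • E)).det)
        = fun t : ℝ => (Pa K + t • Bm + (t * t) • Cm).det :=
      funext fun t => by rw [hexp]
    rw [hfe]
    exact det_hasDerivAt (Pa K) Bm Cm hunit
  have hlog := hdet.log (by rw [hP0]; exact hdetpos.ne')
  have hval : (Pa K).det * (A * Bm).trace / (Pa (K + (0:ℝ) • E)).det
      = (((2 : ℝ) • (K * H * Pf * Hᵀ) + (2 : ℝ) • (K * R)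
            - (2 : ℝ) • (Pf * Hᵀ))ᵀ * A * E).trace := by
    rw [hP0, mul_comm, mul_div_assoc, div_self hdetpos.ne', mul_one]
    -- trace identity
    have e1 : (A * (E * R * Kᵀ)).trace = (R * (Kᵀ * (A * E))).trace := by
      rw [Matrix.trace_mul_comm,
        show E * R * Kᵀ * A = E * (R * (Kᵀ * A)) by simp only [Matrix.mul_assoc],
        Matrix.trace_mul_comm]
      simp only [Matrix.mul_assoc]
    have e2 : (A * (K * R * Eᵀ)).trace = (R * (Kᵀ * (A * E))).trace := by
      rw [← Matrix.trace_transpose (A * (K * R * Eᵀ)),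
        show (A * (K * R * Eᵀ))ᵀ = E * (R * (Kᵀ * A)) by
          simp only [transpose_mul, transpose_transpose, hAsymm, hR', Matrix.mul_assoc],
        Matrix.trace_mul_comm]
      simp only [Matrix.mul_assoc]
    have e3 : (A * (E * H * Pf * (1 - K * H)ᵀ)).trace
        = (H * (Pf * (A * E))).trace - (H * (Pf * (Hᵀ * (Kᵀ * (A * E))))).trace := by
      rw [Matrix.trace_mul_comm,
        show E * H * Pf * (1 - K * H)ᵀ * A = E * (H * (Pf * ((1 - K * H)ᵀ * A))) by
          simp only [Matrix.mul_assoc],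
        Matrix.trace_mul_comm]
      simp only [transpose_sub, transpose_one, transpose_mul, Matrix.sub_mul,
        Matrix.mul_sub, Matrix.one_mul, Matrix.mul_one, trace_sub, Matrix.mul_assoc]
    have e4 : (A * ((1 - K * H) * Pf * (E * H)ᵀ)).trace
        = (H * (Pf * (A * E))).trace - (H * (Pf * (Hᵀ * (Kᵀ * (A * E))))).trace := by
      rw [← Matrix.trace_transpose (A * ((1 - K * H) * Pf * (E * H)ᵀ)),
        show (A * ((1 - K * H) * Pf * (E * H)ᵀ))ᵀ = E * (H * (Pf * ((1 - K * H)ᵀ * A))) by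
          simp only [transpose_mul, transpose_transpose, hAsymm, hPf', Matrix.mul_assoc],
        Matrix.trace_mul_comm]
      simp only [transpose_sub, transpose_one, transpose_mul, Matrix.sub_mul,
        Matrix.mul_sub, Matrix.one_mul, Matrix.mul_one, trace_sub, Matrix.mul_assoc]
    rw [hBm]
    simp only [Matrix.mul_add, Matrix.mul_sub, trace_add, trace_sub, e1, e2, e3, e4]
    simp only [transpose_add, transpose_sub, transpose_smul, transpose_mul,
      transpose_transpose, hPf', hR', Matrix.add_mul, Matrix.sub_mul, Matrix.smul_mul,
      trace_add, trace_sub, trace_smul, smul_eq_mul, Matrix.mul_assoc]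
    ring
  rw [← hval]
  exact hlog
end

section
/- Let K* = Pᶠ·Hᵀ·(H·Pᶠ·Hᵀ + R)⁻¹ be the Kalman gain. Then for every n×m real matrix E, the real function t ↦ log(det(Pᵃ(K* + t·E))) has derivative zero at t = 0; that is, the Kalman gain is a critical point of the log generalized variance of the analysis distribution. -/
open Matrix

private lemma quad_form {k l : ℕ} (B : Matrix (Fin k) (Fin l) ℝ)
    (M : Matrix (Fin l) (Fin l) ℝ) (x : Fin k → ℝ) :
    x ⬝ᵥ (B * M * Bᵀ) *ᵥ x = (Bᵀ *ᵥ x) ⬝ᵥ M *ᵥ (Bᵀ *ᵥ x) := by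
  rw [← Matrix.mulVec_mulVec, ← Matrix.mulVec_mulVec, Matrix.dotProduct_mulVec,
    ← Matrix.mulVec_transpose]

/-- The Kalman gain `K* = Pᶠ Hᵀ (H Pᶠ Hᵀ + R)⁻¹` is a critical point of the log
generalized variance: for every direction `E`, the function
`t ↦ log (det (Pᵃ(K* + t E)))` has derivative zero at `t = 0`, where
`Pᵃ(K) = (I − K H) Pᶠ (I − K H)ᵀ + K R Kᵀ`. -/
theorem kalman_gain_critical_point
    (n m : ℕ) (hn : 0 < n) (hm : 0 < m)
    (Pf : Matrix (Fin n) (Fin n) ℝ) (hPf : Pf.PosDef)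
    (R : Matrix (Fin m) (Fin m) ℝ) (hR : R.PosDef)
    (H : Matrix (Fin m) (Fin n) ℝ)
    (Pa : Matrix (Fin n) (Fin m) ℝ → Matrix (Fin n) (Fin n) ℝ)
    (hPa : ∀ K, Pa K = (1 - K * H) * Pf * (1 - K * H)ᵀ + K * R * Kᵀ)
    (Kstar : Matrix (Fin n) (Fin m) ℝ)
    (hKstar : Kstar = Pf * Hᵀ * (H * Pf * Hᵀ + R)⁻¹) :
    ∀ E : Matrix (Fin n) (Fin m) ℝ,
      HasDerivAt (fun t : ℝ => Real.log (Pa (Kstar + t • E)).det) 0 0 := by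
  intro E
  set S : Matrix (Fin m) (Fin m) ℝ := H * Pf * Hᵀ + R with hS
  -- S is positive definite
  have hHPH : (H * Pf * Hᵀ).PosSemidef := by
    have := hPf.posSemidef.mul_mul_conjTranspose_same H
    simpa [Matrix.conjTranspose_eq_transpose_of_trivial] using this
  have hSpd : S.PosDef := Matrix.PosDef.posSemidef_add hHPH hR
  -- key identity: Kstar * S = Pf * Hᵀ
  have key : Kstar * S = Pf * Hᵀ := by
    rw [hKstar, Matrix.mul_assoc, Matrix.nonsing_inv_mul _ hSpd.det_pos.ne'.isUnit,
      Matrix.mul_one]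
  have hPfsymm : Pfᵀ = Pf := by
    simpa [Matrix.conjTranspose_eq_transpose_of_trivial] using hPf.isHermitian.eq
  have hRsymm : Rᵀ = R := by
    simpa [Matrix.conjTranspose_eq_transpose_of_trivial] using hR.isHermitian.eq
  -- cross terms
  have key2 : (1 - Kstar * H) * Pf * Hᵀ = Kstar * R := by
    have h0 : (1 - Kstar * H) * Pf * Hᵀ = Pf * Hᵀ - Kstar * (H * Pf * Hᵀ) := by
      simp only [Matrix.sub_mul, Matrix.one_mul, Matrix.mul_assoc]
    rw [h0, ← key, hS, Matrix.mul_add]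
    abel
  have key2' : (E * H) * Pf * (1 - Kstar * H)ᵀ = E * R * Kstarᵀ := by
    have h1 : ((1 - Kstar * H) * Pf * Hᵀ)ᵀ = H * Pf * (1 - Kstar * H)ᵀ := by
      simp [Matrix.transpose_mul, hPfsymm, Matrix.mul_assoc]
    have h2 : (Kstar * R)ᵀ = R * Kstarᵀ := by
      simp [Matrix.transpose_mul, hRsymm]
    calc (E * H) * Pf * (1 - Kstar * H)ᵀ
        = E * (H * Pf * (1 - Kstar * H)ᵀ) := by
          simp only [Matrix.mul_assoc]
      _ = E * (R * Kstarᵀ) := by rw [← h1, key2, h2]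
      _ = E * R * Kstarᵀ := by simp only [Matrix.mul_assoc]
  have key2'' : (1 - Kstar * H) * Pf * (E * H)ᵀ = Kstar * R * Eᵀ := by
    have : (1 - Kstar * H) * Pf * (E * H)ᵀ = ((1 - Kstar * H) * Pf * Hᵀ) * Eᵀ := by
      simp [Matrix.transpose_mul, Matrix.mul_assoc]
    rw [this, key2]
  -- quadratic expansion
  have expand : ∀ t : ℝ,
      Pa (Kstar + t • E) = Pa Kstar + (t ^ 2) • (E * S * Eᵀ) := by
    intro t
    rw [hPa, hPa]
    have hB : (1 : Matrix (Fin n) (Fin n) ℝ) - (Kstar + t • E) * H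
        = (1 - Kstar * H) - t • (E * H) := by
      simp [Matrix.add_mul, Matrix.smul_mul]
      abel
    rw [hB]
    have hq : E * S * Eᵀ = (E * H) * Pf * (E * H)ᵀ + E * R * Eᵀ := by
      rw [hS]
      simp only [Matrix.mul_add, Matrix.add_mul, Matrix.transpose_mul, Matrix.mul_assoc]
    rw [hq]
    have k1 := key2'
    have k2 := key2''
    generalize (1 - Kstar * H : Matrix (Fin n) (Fin n) ℝ) = B0 at k1 k2 ⊢
    simp only [Matrix.sub_mul, Matrix.mul_sub, Matrix.add_mul, Matrix.mul_add,
      Matrix.transpose_sub, Matrix.transpose_add,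
      Matrix.smul_mul, Matrix.mul_smul, Matrix.transpose_smul, smul_smul, smul_sub, smul_add]
    rw [k1, k2]
    module
  -- Pa Kstar is positive definite
  have hPaPD : (Pa Kstar).PosDef := by
    rw [hPa]
    set B : Matrix (Fin n) (Fin n) ℝ := 1 - Kstar * H with hBdef
    have hs1 : (B * Pf * Bᵀ).PosSemidef := by
      have := hPf.posSemidef.mul_mul_conjTranspose_same B
      simpa [Matrix.conjTranspose_eq_transpose_of_trivial] using this
    have hs2 : (Kstar * R * Kstarᵀ).PosSemidef := by
      have := hR.posSemidef.mul_mul_conjTranspose_same Kstar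
      simpa [Matrix.conjTranspose_eq_transpose_of_trivial] using this
    refine Matrix.PosDef.of_dotProduct_mulVec_pos (hs1.1.add hs2.1) (fun x hx => ?_)
    rw [star_trivial, Matrix.add_mulVec, dotProduct_add]
    rw [quad_form, quad_form]
    by_cases hKx : Kstarᵀ *ᵥ x = 0
    · have hBx : Bᵀ *ᵥ x = x := by
        rw [hBdef]
        simp [Matrix.transpose_sub, Matrix.transpose_mul, Matrix.sub_mulVec,
          ← Matrix.mulVec_mulVec, hKx]
      rw [hBx, hKx]
      have h1 : 0 < x ⬝ᵥ Pf *ᵥ x := by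
        simpa using hPf.dotProduct_mulVec_pos hx
      simp [h1]
    · have h2 : 0 < (Kstarᵀ *ᵥ x) ⬝ᵥ R *ᵥ (Kstarᵀ *ᵥ x) := by
        simpa using hR.dotProduct_mulVec_pos hKx
      have h1 : 0 ≤ (Bᵀ *ᵥ x) ⬝ᵥ Pf *ᵥ (Bᵀ *ᵥ x) := by
        simpa using hPf.posSemidef.dotProduct_mulVec_nonneg (Bᵀ *ᵥ x)
      linarith
  have hdetpos : 0 < (Pa Kstar).det := hPaPD.det_pos
  -- rewrite function as composition
  set A : Matrix (Fin n) (Fin n) ℝ := Pa Kstar with hA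
  set M : Matrix (Fin n) (Fin n) ℝ := E * S * Eᵀ with hM
  have hfun : (fun t : ℝ => Real.log (Pa (Kstar + t • E)).det)
      = (fun s : ℝ => Real.log (A + s • M).det) ∘ (fun t : ℝ => t ^ 2) := by
    funext t
    simp [Function.comp, expand t]
  rw [hfun]
  have hdet : DifferentiableAt ℝ (fun s : ℝ => (A + s • M).det) 0 := by
    simp only [Matrix.det_apply', Matrix.add_apply, Matrix.smul_apply, smul_eq_mul]
    apply DifferentiableAt.fun_sum
    intro σ _
    apply DifferentiableAt.const_mul
    apply DifferentiableAt.fun_finsetProd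
    intro i _
    fun_prop
  have hdet0 : (A + (0 : ℝ) • M).det = A.det := by simp
  have hg : DifferentiableAt ℝ Real.log ((A + (0:ℝ) • M).det) := by
    rw [hdet0]; exact Real.differentiableAt_log hdetpos.ne'
  have hF : DifferentiableAt ℝ (fun s : ℝ => Real.log (A + s • M).det) 0 :=
    DifferentiableAt.comp (g := Real.log) (0 : ℝ) hg hdet
  have hsq : HasDerivAt (fun t : ℝ => t ^ 2) 0 (0 : ℝ) := by
    simpa using hasDerivAt_pow 2 (0 : ℝ)
  have h02 : ((0 : ℝ) ^ 2) = 0 := by norm_num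
  have hF2 : HasDerivAt (fun s : ℝ => Real.log (A + s • M).det)
      (deriv (fun s : ℝ => Real.log (A + s • M).det) 0) ((0 : ℝ) ^ 2) := by
    rw [h02]; exact hF.hasDerivAt
  have hcomp : HasDerivAt ((fun s : ℝ => Real.log (A + s • M).det) ∘ (fun t : ℝ => t ^ 2))
      ((deriv (fun s : ℝ => Real.log (A + s • M).det) 0) * 0) 0 :=
    HasDerivAt.comp (0 : ℝ) hF2 hsq
  simpa using hcomp
end

section
/- For an n×m real matrix K, the gradient of log(det(Pᵃ(K))) with respect to K, namely G(K) = (Pᵃ(K))⁻¹·(2·K·H·Pᶠ·Hᵀ + 2·K·R − 2·Pᶠ·Hᵀ), vanishes (G(K) = 0) if and only if K equals the Kalman gain K* = Pᶠ·Hᵀ·(H·Pᶠ·Hᵀ + R)⁻¹. -/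
open Matrix

lemma pa_posDef {n m : ℕ}
    (Pf : Matrix (Fin n) (Fin n) ℝ) (hPf : Pf.PosDef)
    (R : Matrix (Fin m) (Fin m) ℝ) (hR : R.PosDef)
    (H : Matrix (Fin m) (Fin n) ℝ) (K : Matrix (Fin n) (Fin m) ℝ) :
    ((1 - K * H) * Pf * (1 - K * H)ᵀ + K * R * Kᵀ).PosDef := by
  have hT1 : (1 - K * H)ᵀ = (1 - K * H)ᴴ :=
    (conjTranspose_eq_transpose_of_trivial _).symm
  have hT2 : Kᵀ = Kᴴ := (conjTranspose_eq_transpose_of_trivial _).symm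
  rw [hT1, hT2]
  have h1 : ((1 - K * H) * Pf * (1 - K * H)ᴴ).PosSemidef :=
    hPf.posSemidef.mul_mul_conjTranspose_same _
  have h2 : (K * R * Kᴴ).PosSemidef := hR.posSemidef.mul_mul_conjTranspose_same _
  refine posDef_iff_dotProduct_mulVec.mpr ⟨h1.isHermitian.add h2.isHermitian, fun x hx => ?_⟩
  rcases lt_or_eq_of_le ((h1.add h2).dotProduct_mulVec_nonneg x) with h | h
  · exact h
  exfalso
  -- the quadratic form vanishes; show x = 0
  have hsum : x ⬝ᵥ ((1 - K * H) * Pf * (1 - K * H)ᴴ) *ᵥ x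
      + x ⬝ᵥ (K * R * Kᴴ) *ᵥ x = 0 := by
    have := h.symm
    simpa [add_mulVec, dotProduct_add] using this
  have hq1 : x ⬝ᵥ ((1 - K * H) * Pf * (1 - K * H)ᴴ) *ᵥ x = 0 := by
    have ha := h1.dotProduct_mulVec_nonneg x
    have hb := h2.dotProduct_mulVec_nonneg x
    simp only [star_trivial] at ha hb
    linarith
  have hq2 : x ⬝ᵥ (K * R * Kᴴ) *ᵥ x = 0 := by
    have ha := h1.dotProduct_mulVec_nonneg x
    have hb := h2.dotProduct_mulVec_nonneg x
    simp only [star_trivial] at ha hb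
    linarith
  -- rewrite as quadratic forms in the transformed vectors
  have e1 : x ⬝ᵥ ((1 - K * H) * Pf * (1 - K * H)ᴴ) *ᵥ x
      = ((1 - K * H)ᴴ *ᵥ x) ⬝ᵥ Pf *ᵥ ((1 - K * H)ᴴ *ᵥ x) := by
    rw [← mulVec_mulVec, ← mulVec_mulVec, dotProduct_mulVec, dotProduct_mulVec,
      ← transpose_transpose (1 - K * H), vecMul_transpose, transpose_transpose,
      hT1, ← dotProduct_mulVec]
  have e2 : x ⬝ᵥ (K * R * Kᴴ) *ᵥ x = (Kᴴ *ᵥ x) ⬝ᵥ R *ᵥ (Kᴴ *ᵥ x) := by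
    rw [← mulVec_mulVec, ← mulVec_mulVec, dotProduct_mulVec, dotProduct_mulVec,
      ← transpose_transpose K, vecMul_transpose, transpose_transpose, hT2, ← dotProduct_mulVec]
  have hv1 : (1 - K * H)ᴴ *ᵥ x = 0 := by
    by_contra hv
    have := hPf.dotProduct_mulVec_pos hv
    simp only [star_trivial] at this
    rw [e1] at hq1
    linarith
  have hv2 : Kᴴ *ᵥ x = 0 := by
    by_contra hv
    have := hR.dotProduct_mulVec_pos hv
    simp only [star_trivial] at this
    rw [e2] at hq2
    linarith
  have : x = 0 := by
    have : (1 - K * H)ᴴ *ᵥ x = x - Hᴴ *ᵥ (Kᴴ *ᵥ x) := by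
      simp [conjTranspose_sub, conjTranspose_mul, sub_mulVec, mulVec_mulVec]
    rw [hv2, mulVec_zero, sub_zero] at this
    rw [← this, hv1]
  exact hx this

/-- The gradient of `log (det (Pᵃ(K)))` with respect to `K`, namely
`G(K) = (Pᵃ(K))⁻¹ (2 K H Pᶠ Hᵀ + 2 K R − 2 Pᶠ Hᵀ)`, vanishes if and only if
`K` is the Kalman gain `K* = Pᶠ Hᵀ (H Pᶠ Hᵀ + R)⁻¹`, where
`Pᵃ(K) = (I − K H) Pᶠ (I − K H)ᵀ + K R Kᵀ`. -/
theorem gradient_vanishes_iff_kalman_gain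
    (n m : ℕ) (hn : 0 < n) (hm : 0 < m)
    (Pf : Matrix (Fin n) (Fin n) ℝ) (hPf : Pf.PosDef)
    (R : Matrix (Fin m) (Fin m) ℝ) (hR : R.PosDef)
    (H : Matrix (Fin m) (Fin n) ℝ)
    (Pa : Matrix (Fin n) (Fin m) ℝ → Matrix (Fin n) (Fin n) ℝ)
    (hPa : ∀ K, Pa K = (1 - K * H) * Pf * (1 - K * H)ᵀ + K * R * Kᵀ)
    (Kstar : Matrix (Fin n) (Fin m) ℝ)
    (hKstar : Kstar = Pf * Hᵀ * (H * Pf * Hᵀ + R)⁻¹) :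
    ∀ K : Matrix (Fin n) (Fin m) ℝ,
      (Pa K)⁻¹ * ((2 : ℝ) • (K * H * Pf * Hᵀ) + (2 : ℝ) • (K * R)
          - (2 : ℝ) • (Pf * Hᵀ)) = 0 ↔ K = Kstar := by
  intro K
  set S : Matrix (Fin m) (Fin m) ℝ := H * Pf * Hᵀ + R with hS
  have hSpd : S.PosDef := by
    have hHT : Hᵀ = Hᴴ := (conjTranspose_eq_transpose_of_trivial _).symm
    have : (H * Pf * Hᴴ).PosSemidef := hPf.posSemidef.mul_mul_conjTranspose_same _
    rw [hS, hHT]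
    exact Matrix.PosDef.posSemidef_add this hR
  have hSdet : IsUnit S.det := (ne_of_gt hSpd.det_pos).isUnit
  have hPaPD : (Pa K).PosDef := by rw [hPa]; exact pa_posDef Pf hPf R hR H K
  have hPadet : IsUnit (Pa K).det := (ne_of_gt hPaPD.det_pos).isUnit
  have hX : (2 : ℝ) • (K * H * Pf * Hᵀ) + (2 : ℝ) • (K * R) - (2 : ℝ) • (Pf * Hᵀ)
      = (2 : ℝ) • (K * S - Pf * Hᵀ) := by
    rw [hS]
    simp only [Matrix.mul_add, smul_sub, smul_add, Matrix.mul_assoc]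
  rw [hX]
  constructor
  · intro h
    have h2 : Pa K * ((Pa K)⁻¹ * ((2 : ℝ) • (K * S - Pf * Hᵀ))) = 0 := by
      rw [h, Matrix.mul_zero]
    rw [← Matrix.mul_assoc, Matrix.mul_nonsing_inv _ hPadet, Matrix.one_mul] at h2
    have h3 : K * S - Pf * Hᵀ = 0 := by
      have := smul_eq_zero.mp h2
      rcases this with h | h
      · norm_num at h
      · exact h
    have h4 : K * S = Pf * Hᵀ := sub_eq_zero.mp h3
    have : K * S * S⁻¹ = Pf * Hᵀ * S⁻¹ := by rw [h4]
    rwa [Matrix.mul_assoc, Matrix.mul_nonsing_inv _ hSdet, Matrix.mul_one, ← hKstar] at this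
  · intro h
    have h4 : K * S = Pf * Hᵀ := by
      rw [h, hKstar, Matrix.mul_assoc, Matrix.nonsing_inv_mul _ hSdet, Matrix.mul_one]
    rw [h4, sub_self, smul_zero, Matrix.mul_zero]
end
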